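/- In the Puiseux monoid P = ⟨(2/3)^n : n ∈ ℕ⟩, for every k ≥ 2 the element x = k·(2/3) admits factorizations of every length ≥ k; in particular {m ∈ ℕ : m ≥ k} ⊆ L(x). -/

import Mathlib

/-- A Puiseux monoid: an additive submonoid of ℚ consisting of nonnegative rationals. -/
def PM.Puiseux (P : AddSubmonoid ℚ) : Prop := ∀ x ∈ P, 0 ≤ x

/-- `a` is an atom of `P`. -/
def PM.IsAtom (P : AddSubmonoid ℚ) (a : ℚ) : Prop :=
  a ∈ P ∧ a ≠ 0 ∧ ∀ x ∈ P, ∀ y ∈ P, a = x + y → x = 0 ∨ y = 0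

/-- A factorization of `x` is a multiset of atoms of `P` summing to `x`. -/
def PM.IsFactorization (P : AddSubmonoid ℚ) (x : ℚ) (z : Multiset ℚ) : Prop :=
  (∀ a ∈ z, PM.IsAtom P a) ∧ z.sum = x

/-- The set of lengths of `x`. -/
def PM.Lengths (P : AddSubmonoid ℚ) (x : ℚ) : Set ℕ :=
  {n | ∃ z : Multiset ℚ, PM.IsFactorization P x z ∧ Multiset.card z = n}

/-- `P` is atomic: it is generated by its set of atoms. -/
def PM.Atomic (P : AddSubmonoid ℚ) : Prop :=
  AddSubmonoid.closure {a | PM.IsAtom P a} = P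

/-- The union of sets of lengths `U_k(P)`. -/
def PM.U (P : AddSubmonoid ℚ) (k : ℕ) : Set ℕ :=
  {l | ∃ x ∈ P, k ∈ PM.Lengths P x ∧ l ∈ PM.Lengths P x}


namespace Stmt12Aux

def f (i : ℕ) : ℚ := (2 / 3 : ℚ) ^ (i + 1)

lemma f_pos (i : ℕ) : 0 < f i := by unfold f; positivity

lemma f_anti {i j : ℕ} (h : i ≤ j) : f j ≤ f i := by
  unfold f
  exact pow_le_pow_of_le_one (by norm_num) (by norm_num) (by omega)

lemma three_f (i : ℕ) : 3 * f (i + 1) = 2 * f i := by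
  unfold f; rw [pow_succ]; ring

lemma card_eq_one {n : ℕ} : ∀ c (s : Multiset ℕ), s.card = c →
    (s.map f).sum = f n → s.card = 1 := by
  intro c
  induction c using Nat.strong_induction_on with
  | _ c IH =>
    intro s hcard hsum
    rcases Nat.lt_or_ge s.card 2 with hlt | hge
    · interval_cases h : s.card
      · exfalso
        rw [Multiset.card_eq_zero] at h
        subst h
        simp at hsum
        exact absurd hsum.symm (ne_of_gt (f_pos n))
      · rfl
    · exfalso
      have hs0 : s ≠ 0 := by
        intro h; rw [h] at hge; simp at hge
      have hne : s.toFinset.Nonempty := by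
        rwa [Multiset.toFinset_nonempty]
      obtain ⟨M, hMmem, hMmax⟩ : ∃ M, M ∈ s ∧ ∀ i ∈ s, i ≤ M :=
        ⟨s.toFinset.max' hne, Multiset.mem_toFinset.mp (s.toFinset.max'_mem hne),
          fun i hi => s.toFinset.le_max' i (Multiset.mem_toFinset.mpr hi)⟩
      rcases le_or_gt M n with hMn | hnM
      · -- all exponents small: sum would exceed f n
        obtain ⟨t, ht⟩ := Multiset.exists_cons_of_mem hMmem
        have htcard : 1 ≤ t.card := by
          have := congrArg Multiset.card ht
          simp only [Multiset.card_cons] at this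
          omega
        obtain ⟨b, hb⟩ := (Multiset.card_pos_iff_exists_mem (s := t)).mp (by omega)
        obtain ⟨u, hu⟩ := Multiset.exists_cons_of_mem hb
        have h1 : f n ≤ f M := f_anti hMn
        have hbs : b ∈ s := by rw [ht]; exact Multiset.mem_cons_of_mem hb
        have hbn : f n ≤ f b := f_anti (le_trans (hMmax b hbs) hMn)
        have h3 : (0:ℚ) ≤ (u.map f).sum := Multiset.sum_nonneg (by
          intro x hx
          obtain ⟨i, _, rfl⟩ := Multiset.mem_map.mp hx
          exact (f_pos i).le)
        rw [ht, hu] at hsum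
        simp only [Multiset.map_cons, Multiset.sum_cons] at hsum
        linarith [f_pos n]
      · -- M > n : mod 3 argument
        set g : ℕ → ℕ := fun i => 2 ^ (i + 1) * 3 ^ (M - i) with hg
        have key : ∀ i, i ≤ M → ((g i : ℕ) : ℚ) = f i * 3 ^ (M + 1) := by
          intro i hi
          have h3 : (3:ℚ) ^ (M + 1) = 3 ^ (i + 1) * 3 ^ (M - i) := by
            rw [← pow_add]; congr 1; omega
          push_cast [hg]
          rw [h3]
          unfold f
          field_simp
          rw [← mul_pow]; norm_num
        have hQ : (s.map (fun i => ((g i : ℕ) : ℚ))).sum = ((g n : ℕ) : ℚ) := by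
          have hmapeq : s.map (fun i => ((g i : ℕ) : ℚ)) =
              s.map (fun i => f i * 3 ^ (M + 1)) :=
            Multiset.map_congr rfl (fun i hi => key i (hMmax i hi))
          rw [hmapeq, Multiset.sum_map_mul_right, hsum, ← key n (le_of_lt hnM)]
        have hN : (s.map g).sum = g n := by
          have : (((s.map g).sum : ℕ) : ℚ) = ((g n : ℕ) : ℚ) := by
            rw [← hQ]; push_cast; rw [Multiset.map_map]; rfl
          exact_mod_cast this
        have hZ : (((s.map g).sum : ℕ) : ZMod 3) = ((g n : ℕ) : ZMod 3) := by
          exact_mod_cast congrArg (Nat.cast : ℕ → ZMod 3) hN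
        have hdvd_gn : (3:ℕ) ∣ g n := by
          have h1 : g n = 2 ^ (n+1) * 3 ^ ((M - n - 1) + 1) := by
            rw [hg]; simp only; congr 2; omega
          rw [h1, pow_succ]
          exact ⟨2 ^ (n+1) * 3 ^ (M - n - 1), by ring⟩
        have hrhs0 : ((g n : ℕ) : ZMod 3) = 0 :=
          (ZMod.natCast_eq_zero_iff _ _).mpr hdvd_gn
        -- split off the copies of M
        have hsplit : ∃ t : Multiset ℕ,
            s = Multiset.replicate (s.count M) M + t ∧ ∀ i ∈ t, i ≠ M ∧ i ∈ s := by
          refine ⟨Multiset.filter (¬ · = M) s, ?_, ?_⟩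
          · conv_lhs => rw [← Multiset.filter_add_not (· = M) s]
            rw [Multiset.filter_eq']
          · intro i hi
            have := Multiset.mem_filter.mp hi
            exact ⟨by simpa using this.2, this.1⟩
        obtain ⟨t, hst, htmem⟩ := hsplit
        have hsum3 : (((s.map g).sum : ℕ) : ZMod 3) = (s.count M : ZMod 3) * 2 ^ (M+1) := by
          have h1 : (s.map g).sum = s.count M * g M + (t.map g).sum := by
            conv_lhs => rw [hst]
            rw [Multiset.map_add, Multiset.sum_add, Multiset.map_replicate,
              Multiset.sum_replicate, smul_eq_mul]
          rw [h1]
          have ht3 : (((t.map g).sum : ℕ) : ZMod 3) = 0 := by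
            rw [ZMod.natCast_eq_zero_iff]
            refine Multiset.dvd_sum ?_
            intro x hx
            obtain ⟨i, hi, rfl⟩ := Multiset.mem_map.mp hx
            obtain ⟨hiM, his⟩ := htmem i hi
            have h2 : g i = 2 ^ (i+1) * 3 ^ ((M - i - 1) + 1) := by
              rw [hg]; simp only; congr 2
              have := hMmax i his
              omega
            rw [h2, pow_succ]
            exact ⟨2 ^ (i+1) * 3 ^ (M - i - 1), by ring⟩
          have hgM : ((g M : ℕ) : ZMod 3) = 2 ^ (M+1) := by
            rw [hg]; simp only [Nat.sub_self, pow_zero, mul_one]; push_cast; rfl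
          rw [Nat.cast_add, ht3, add_zero, Nat.cast_mul, hgM]
        have hc0 : (s.count M : ZMod 3) = 0 := by
          have hu : IsUnit ((2:ZMod 3) ^ (M+1)) :=
            (IsUnit.of_mul_eq_one (a := (2:ZMod 3)) 2 (by decide)).pow _
          have heq : (s.count M : ZMod 3) * 2 ^ (M+1) = 0 := by
            rw [← hsum3, hZ, hrhs0]
          exact (hu.mul_left_eq_zero).mp heq
        have hdvdc : (3:ℕ) ∣ s.count M := (ZMod.natCast_eq_zero_iff _ _).mp hc0
        have hcount1 : 1 ≤ s.count M := Multiset.one_le_count_iff_mem.mpr hMmem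
        have hcount3 : 3 ≤ s.count M := by omega
        have hrep : Multiset.replicate 3 M ≤ s := Multiset.le_count_iff_replicate_le.mp hcount3
        obtain ⟨t2, ht2⟩ := Multiset.le_iff_exists_add.mp hrep
        have hM1 : M = (M - 1) + 1 := by omega
        have h4 : 3 * f M = 2 * f (M - 1) := by
          have := three_f (M - 1)
          rwa [← hM1] at this
        have h2s : (s.map f).sum = 3 * f M + (t2.map f).sum := by
          conv_lhs => rw [ht2]
          rw [Multiset.map_add, Multiset.sum_add, Multiset.map_replicate,
            Multiset.sum_replicate, nsmul_eq_mul]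
          norm_num
        have hs'sum : ((t2 + Multiset.replicate 2 (M-1)).map f).sum = f n := by
          rw [Multiset.map_add, Multiset.sum_add, Multiset.map_replicate,
            Multiset.sum_replicate, nsmul_eq_mul]
          push_cast
          rw [← h4]
          linarith [h2s, hsum]
        have hcs : s.card = 3 + t2.card := by rw [ht2]; simp; omega
        have hcs' : (t2 + Multiset.replicate 2 (M-1)).card = t2.card + 2 := by simp
        have := IH (t2.card + 2) (by omega) _ hcs' hs'sum
        omega

noncomputable def Pm : AddSubmonoid ℚ :=
  AddSubmonoid.closure {q : ℚ | ∃ n : ℕ, q = (2 / 3 : ℚ) ^ (n + 1)}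

lemma mem_repr {x : ℚ} (hx : x ∈ Pm) : ∃ s : Multiset ℕ, (s.map f).sum = x := by
  induction hx using AddSubmonoid.closure_induction with
  | mem q hq =>
    obtain ⟨i, rfl⟩ := hq
    exact ⟨{i}, by simp [f]⟩
  | zero => exact ⟨0, by simp⟩
  | add x y hx hy ihx ihy =>
    obtain ⟨s, hs⟩ := ihx
    obtain ⟨t, ht⟩ := ihy
    exact ⟨s + t, by rw [Multiset.map_add, Multiset.sum_add, hs, ht]⟩

lemma atom_f (n : ℕ) : PM.IsAtom Pm (f n) := by
  refine ⟨AddSubmonoid.subset_closure ⟨n, rfl⟩, ne_of_gt (f_pos n), ?_⟩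
  intro x hx y hy hxy
  obtain ⟨u, hu⟩ := mem_repr hx
  obtain ⟨v, hv⟩ := mem_repr hy
  have hsum : ((u + v).map f).sum = f n := by
    rw [Multiset.map_add, Multiset.sum_add, hu, hv, ← hxy]
  have hc := card_eq_one _ (u + v) rfl hsum
  simp only [Multiset.card_add] at hc
  rcases Nat.eq_zero_or_pos u.card with h0 | h1
  · left
    rw [Multiset.card_eq_zero] at h0
    rw [h0] at hu
    simpa using hu.symm
  · right
    have : v.card = 0 := by omega
    rw [Multiset.card_eq_zero] at this
    rw [this] at hv
    simpa using hv.symm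

lemma T (j : ℕ) : ((Multiset.range j).map (fun i => f (i + 1))).sum + 3 * f (j + 1) = 4/3 := by
  induction j with
  | zero => simp [f]; norm_num
  | succ j ih =>
    rw [Multiset.range_succ, Multiset.map_cons, Multiset.sum_cons]
    have h := three_f (j + 1)
    linarith

end Stmt12Aux

theorem stmt12 :
    let P := AddSubmonoid.closure {q : ℚ | ∃ n : ℕ, q = (2 / 3 : ℚ) ^ (n + 1)}
    ∀ k : ℕ, 2 ≤ k → ∀ m : ℕ, k ≤ m →
      m ∈ PM.Lengths P ((k : ℚ) * (2 / 3)) := by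
  intro P k hk m hm
  rcases eq_or_lt_of_le hm with heq | hlt
  · refine ⟨(Multiset.replicate k 0).map Stmt12Aux.f, ⟨?_, ?_⟩, ?_⟩
    · intro a ha
      obtain ⟨i, _, rfl⟩ := Multiset.mem_map.mp ha
      exact Stmt12Aux.atom_f i
    · rw [Multiset.map_replicate, Multiset.sum_replicate, nsmul_eq_mul]
      unfold Stmt12Aux.f
      norm_num
    · simp [← heq]
  · have h1 : m - k - 1 + 1 = m - k := by omega
    refine ⟨(Multiset.replicate (k-2) 0 + (Multiset.range (m-k-1)).map (·+1) +
        Multiset.replicate 3 (m-k)).map Stmt12Aux.f, ⟨?_, ?_⟩, ?_⟩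
    · intro a ha
      obtain ⟨i, _, rfl⟩ := Multiset.mem_map.mp ha
      exact Stmt12Aux.atom_f i
    · rw [Multiset.map_add, Multiset.map_add, Multiset.sum_add, Multiset.sum_add,
        Multiset.map_replicate, Multiset.map_replicate, Multiset.sum_replicate,
        Multiset.sum_replicate, Multiset.map_map, nsmul_eq_mul, nsmul_eq_mul]
      have hT := Stmt12Aux.T (m-k-1)
      rw [h1] at hT
      simp only [Function.comp_def] at *
      have hcast : ((k-2:ℕ):ℚ) = (k:ℚ) - 2 := by
        push_cast [Nat.cast_sub hk]
        ring
      have hf0 : Stmt12Aux.f 0 = 2/3 := by unfold Stmt12Aux.f; norm_num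
      rw [hcast, hf0]
      push_cast
      linarith [hT]
    · simp
      omega
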